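/- Let k be a C_r field and let f_1,...,f_s ∈ k[x_0,...,x_n] be homogeneous polynomials all of the same degree d > 0. If n+1 > s·d^r, then f_1,...,f_s have a common nontrivial zero in k^{n+1}. -/

import Mathlib

open MvPolynomial

/-- A field `k` is a `C_r` field (for a real number `r ≥ 0`) if every homogeneous polynomial
of degree `d > 0` in more than `d^r` variables over `k` has a nontrivial zero in `k`. -/
def IsCrField (k : Type) [Field k] (r : ℝ) : Prop :=
  ∀ (N d : ℕ), 0 < d → ((d : ℝ) ^ r < (N : ℝ)) →
    ∀ f : MvPolynomial (Fin N) k, f.IsHomogeneous d →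
      ∃ x : Fin N → k, x ≠ 0 ∧ eval x f = 0

section Helpers

variable {k : Type} [Field k]



lemma eval_aeval' {V W : ℕ} (x : Fin W → k) (g : Fin V → MvPolynomial (Fin W) k)
    (Φ : MvPolynomial (Fin V) k) :
    eval x (MvPolynomial.aeval g Φ) = eval (fun j => eval x (g j)) Φ := by
  have h : ∀ (p : MvPolynomial (Fin V) k) (y : Fin V → k), eval y p = aeval y p :=
    fun p y => (congrFun (congrArg _ (coe_aeval_eq_eval y)) p).symm
  have h2 : ∀ (p : MvPolynomial (Fin W) k) (y : Fin W → k), eval y p = aeval y p :=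
    fun p y => (congrFun (congrArg _ (coe_aeval_eq_eval y)) p).symm
  rw [h2, aeval_eq_bind₁, aeval_bind₁, h]
  congr 1

/-- Anisotropic form of degree `e` in `v` variables. -/
def Aniso (k : Type) [Field k] (e v : ℕ) : Prop :=
  ∃ Φ : MvPolynomial (Fin v) k, Φ.IsHomogeneous e ∧ ∀ x : Fin v → k, eval x Φ = 0 → x = 0

lemma aniso_square {e v : ℕ} (h : Aniso k e v) : Aniso k (e * e) (v * v) := by
  obtain ⟨Φ, hΦ, haniso⟩ := h
  set emb : Fin v → Fin v → Fin (v * v) := fun j i => finProdFinEquiv (j, i) with hemb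
  refine ⟨MvPolynomial.aeval (fun j => rename (emb j) Φ) Φ, ?_, ?_⟩
  · exact hΦ.aeval _ (fun j => hΦ.rename_isHomogeneous)
  · intro x hx
    rw [eval_aeval'] at hx
    have h1 : ∀ j, eval (x ∘ emb j) Φ = 0 := by
      have hz := haniso _ hx
      intro j
      have := congrFun hz j
      rwa [eval_rename] at this
    funext w
    obtain ⟨⟨j, i⟩, rfl⟩ := finProdFinEquiv.surjective w
    exact congrFun (haniso _ (h1 j)) i

lemma exists_norm_form (hk : ¬ IsAlgClosed k) : ∃ e, 2 ≤ e ∧ Aniso k e e := by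
  have : ¬ ∀ p : Polynomial k, p.Monic → Irreducible p → ∃ x, p.eval x = 0 := by
    intro h
    exact hk (IsAlgClosed.of_exists_root k h)
  push_neg at this
  obtain ⟨p, hmonic, hirr, hnoroot⟩ := this
  haveI : Fact (Irreducible p) := ⟨hirr⟩
  set K := AdjoinRoot p
  have hp0 : p ≠ 0 := hmonic.ne_zero
  set pb : PowerBasis k K := AdjoinRoot.powerBasis hp0 with hpb
  set e := pb.dim with he
  have he2 : 2 ≤ e := by
    rw [he, hpb, AdjoinRoot.powerBasis_dim]
    by_contra hlt
    push_neg at hlt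
    interval_cases h : p.natDegree
    · exact hirr.not_isUnit (hmonic.natDegree_eq_zero.mp h ▸ isUnit_one)
    · obtain ⟨x, hx⟩ := p.exists_root_of_degree_eq_one
        (by rw [Polynomial.degree_eq_natDegree hp0, h]; rfl)
      exact hnoroot x hx
  haveI : FiniteDimensional k K := PowerBasis.finite pb
  refine ⟨e, he2, ?_⟩
  classical
  set b : Module.Basis (Fin e) k K := pb.basis
  set M : Matrix (Fin e) (Fin e) (MvPolynomial (Fin e) k) :=
    Matrix.of fun i j : Fin e =>
      ∑ l : Fin e, (X l : MvPolynomial (Fin e) k) * C (Algebra.leftMulMatrix b (b l) i j)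
    with hM
  have hMapply : ∀ i j, M i j =
      ∑ l : Fin e, (X l : MvPolynomial (Fin e) k) * C (Algebra.leftMulMatrix b (b l) i j) :=
    fun i j => rfl
  set Φ : MvPolynomial (Fin e) k := M.det with hΦdef
  have heval : ∀ x : Fin e → k, eval x Φ = Algebra.norm k (∑ l, x l • b l) := by
    intro x
    rw [hΦdef, RingHom.map_det (eval x) M, Algebra.norm_eq_matrix_det b]
    congr 1
    ext i j
    rw [RingHom.mapMatrix_apply, Matrix.map_apply, hMapply]
    rw [map_sum (Algebra.leftMulMatrix b), Matrix.sum_apply]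
    rw [map_sum (eval x)]
    congr 1
    funext l
    rw [map_smul (Algebra.leftMulMatrix b)]
    simp [Matrix.smul_apply, smul_eq_mul]
  refine ⟨Φ, ?_, ?_⟩
  · rw [hΦdef, Matrix.det_apply]
    apply IsHomogeneous.sum
    intro σ _
    have h1 : (∏ i, M (σ i) i).IsHomogeneous e := by
      have := IsHomogeneous.prod Finset.univ (fun i => M (σ i) i) (fun _ => 1) ?_
      · simpa using this
      · intro i _
        show (M (σ i) i).IsHomogeneous 1
        rw [hMapply]
        apply IsHomogeneous.sum
        intro l _
        simpa using (isHomogeneous_X k l).mul (isHomogeneous_C _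
          (Algebra.leftMulMatrix b (b l) (σ i) i))
    have h2 := (homogeneousSubmodule (Fin e) k e).toAddSubgroup.zsmul_mem
      ((mem_homogeneousSubmodule _ _).mpr h1) (Equiv.Perm.sign σ)
    rw [← mem_homogeneousSubmodule]
    simpa [Units.smul_def] using h2
  · intro x hx
    rw [heval] at hx
    have h0 := Algebra.norm_eq_zero_iff.mp hx
    have hli := b.linearIndependent
    rw [Fintype.linearIndependent_iff] at hli
    funext i
    exact hli x h0 i

lemma aniso_bound {r : ℝ} (hk : IsCrField k r) {D v : ℕ} (hD : 0 < D) (h : Aniso k D v) :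
    ¬ ((D:ℝ)^r < (v:ℝ)) := by
  intro hlt
  obtain ⟨Φ, hΦ, haniso⟩ := h
  obtain ⟨x, hx0, hx⟩ := hk v D hD hlt Φ hΦ
  exact hx0 (haniso x hx)

lemma aniso_plug {n s d : ℕ} (hs : 0 < s) (f : Fin s → MvPolynomial (Fin (n+1)) k)
    (hf : ∀ i, (f i).IsHomogeneous d)
    (hno : ∀ x : Fin (n+1) → k, (∀ i, eval x (f i) = 0) → x = 0)
    {e v : ℕ} (hA : Aniso k e v) (hsv : s ≤ v) :
    Aniso k (d * e) ((n+1) * (v / s)) := by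
  classical
  obtain ⟨Φ, hΦ, haniso⟩ := hA
  set m := v / s with hm
  set emb : Fin m → Fin (n+1) → Fin ((n+1) * m) := fun b w => finProdFinEquiv (w, b) with hembd
  have hsm : s * m ≤ v := by
    rw [hm, mul_comm]
    exact Nat.div_mul_le_self v s
  set g : Fin v → MvPolynomial (Fin ((n+1) * m)) k := fun j =>
    if h : (j : ℕ) < s * m then
      let q := finProdFinEquiv.symm (⟨(j : ℕ), h⟩ : Fin (s * m))
      rename (emb q.2) (f q.1)
    else 0
    with hgdef
  have hg : ∀ j, (g j).IsHomogeneous d := by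
    intro j
    rw [hgdef]
    dsimp only
    split
    · exact (hf _).rename_isHomogeneous
    · exact isHomogeneous_zero _ _ _
  refine ⟨MvPolynomial.aeval g Φ, hΦ.aeval g hg, ?_⟩
  intro y hy
  rw [eval_aeval'] at hy
  have hz := haniso _ hy
  have hblock : ∀ b : Fin m, y ∘ emb b = 0 := by
    intro b
    apply hno
    intro i
    set j0 : Fin (s * m) := finProdFinEquiv (i, b) with hj0
    set j : Fin v := Fin.castLE hsm j0 with hj
    have hjlt : (j : ℕ) < s * m := by
      rw [hj]
      exact j0.2
    have hgj : g j = rename (emb b) (f i) := by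
      rw [hgdef]
      dsimp only
      rw [dif_pos hjlt]
      have : (⟨(j : ℕ), hjlt⟩ : Fin (s * m)) = j0 := by
        apply Fin.ext
        rfl
      rw [this, hj0, Equiv.symm_apply_apply]
    have := congrFun hz j
    rw [hgj] at this
    rwa [eval_rename] at this
  funext w
  obtain ⟨⟨a, b⟩, rfl⟩ := finProdFinEquiv.surjective w
  exact congrFun (hblock b) a

lemma degree_fin {N : ℕ} (v : Fin N →₀ ℕ) : v.degree = ∑ l, v l := by
  rw [Finsupp.degree]
  exact Finset.sum_subset (Finset.subset_univ _)
    (fun x _ hx => Finsupp.notMem_support_iff.mp hx)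

lemma homogComponent_mul_homog {N : ℕ} {c q : MvPolynomial (Fin N) k} {d M : ℕ}
    (hq : q.IsHomogeneous d) (hdM : d ≤ M) :
    homogeneousComponent M (c * q) = homogeneousComponent (M - d) c * q := by
  conv_lhs => rw [← sum_homogeneousComponent c]
  rw [Finset.sum_mul, map_sum]
  have hterm : ∀ e, homogeneousComponent M ((homogeneousComponent e c) * q)
      = if M = e + d then (homogeneousComponent e c) * q else 0 := by
    intro e
    exact homogeneousComponent_of_mem
      ((mem_homogeneousSubmodule _ _).mpr ((homogeneousComponent_isHomogeneous e c).mul hq))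
  simp_rw [hterm]
  have hcond : ∀ e : ℕ, (M = e + d) ↔ (e = M - d) := by omega
  simp_rw [hcond]
  rw [Finset.sum_ite_eq' (Finset.range (c.totalDegree + 1)) (M - d)
    (fun e => homogeneousComponent e c * q)]
  split
  · rfl
  · next h =>
    rw [Finset.mem_range, not_lt] at h
    rw [homogeneousComponent_eq_zero _ c (by omega), zero_mul]

lemma exists_homog_comb {N s d M : ℕ} (hd : 0 < d) (hdM : d ≤ M)
    (f : Fin s → MvPolynomial (Fin N) k) (p : MvPolynomial (Fin N) k)
    (hp : p.IsHomogeneous M) (hmem : p ∈ Ideal.span (Set.range f))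
    (hf : ∀ i, (f i).IsHomogeneous d) :
    ∃ g : Fin s → MvPolynomial (Fin N) k,
      (∀ j, (g j).IsHomogeneous (M - d)) ∧ p = ∑ j, g j * f j := by
  obtain ⟨c, hc⟩ := (Ideal.mem_span_range_iff_exists_fun).mp hmem
  refine ⟨fun j => homogeneousComponent (M - d) (c j),
    fun j => homogeneousComponent_isHomogeneous _ _, ?_⟩
  calc p = homogeneousComponent M p := by
        rw [homogeneousComponent_of_mem ((mem_homogeneousSubmodule _ _).mpr hp), if_pos rfl]
    _ = homogeneousComponent M (∑ j, c j * f j) := by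
        rw [show ∑ j, c j * f j = p from by simpa [smul_eq_mul] using hc]
    _ = ∑ j, homogeneousComponent M (c j * f j) := map_sum _ _ _
    _ = ∑ j, homogeneousComponent (M - d) (c j) * f j :=
        Finset.sum_congr rfl fun j _ => homogComponent_mul_homog (hf j) hdM

lemma degree_add' {N : ℕ} (v w : Fin N →₀ ℕ) : (v + w).degree = v.degree + w.degree := by
  rw [degree_fin, degree_fin, degree_fin, ← Finset.sum_add_distrib]
  rfl

lemma degree_single' {N : ℕ} (l : Fin N) (m : ℕ) : (Finsupp.single l m).degree = m := by
  rw [degree_fin, Finset.sum_eq_single l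
    (fun b _ hb => Finsupp.single_eq_of_ne' (Ne.symm hb)) (by simp)]
  simp

lemma degree_sum_fam {N : ℕ} {ι : Type} [Fintype ι] (g : ι → (Fin N →₀ ℕ)) :
    (∑ i, g i).degree = ∑ i, (g i).degree := by
  rw [degree_fin]
  rw [Finset.sum_congr rfl (fun l _ => Finsupp.finset_sum_apply Finset.univ g l)]
  rw [Finset.sum_comm]
  exact Finset.sum_congr rfl fun i _ => (degree_fin (g i)).symm

def Gset {N s : ℕ} (f : Fin s → MvPolynomial (Fin N) k) (d D₀ t : ℕ) :
    Set (MvPolynomial (Fin N) k) :=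
  {p | ∃ (a : Fin s → ℕ) (v : Fin N →₀ ℕ),
    v.degree + d * (∑ i, a i) = t ∧ v.degree < D₀ ∧ p = (∏ i, f i ^ a i) * monomial v 1}

lemma mul_f_mem_span {N s : ℕ} (f : Fin s → MvPolynomial (Fin N) k) (d D₀ : ℕ) (j : Fin s)
    {t : ℕ} {q : MvPolynomial (Fin N) k} (hq : q ∈ Submodule.span k (Gset f d D₀ t)) :
    f j * q ∈ Submodule.span k (Gset f d D₀ (t + d)) := by
  induction hq using Submodule.span_induction with
  | mem p hp =>
    obtain ⟨a, v, hsum, hlt, rfl⟩ := hp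
    apply Submodule.subset_span
    classical
    refine ⟨(fun i => a i + if i = j then 1 else 0), v, ?_, hlt, ?_⟩
    · have : ∑ i, (a i + if i = j then 1 else 0) = (∑ i, a i) + 1 := by
        rw [Finset.sum_add_distrib, Finset.sum_ite_eq' Finset.univ j (fun _ => 1)]
        simp
      rw [this, Nat.mul_succ]
      omega
    · have hprod : (∏ i, f i ^ (a i + if i = j then 1 else 0)) = f j * ∏ i, f i ^ a i := by
        rw [show (∏ i, f i ^ (a i + if i = j then 1 else 0))
            = ∏ i, (f i ^ a i * f i ^ (if i = j then 1 else 0)) from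
          Finset.prod_congr rfl fun i _ => by rw [pow_add],
          Finset.prod_mul_distrib]
        rw [mul_comm]
        congr 1
        rw [Finset.prod_eq_single j (fun b _ hb => by rw [if_neg hb, pow_zero]) (by simp)]
        simp
      rw [hprod, mul_assoc]
  | zero => simp
  | add p q _ _ hp hq => rw [mul_add]; exact Submodule.add_mem _ hp hq
  | smul c p _ hp => rw [mul_smul_comm]; exact Submodule.smul_mem _ c hp

lemma homog_mem_span_of_monomials {N s : ℕ} (f : Fin s → MvPolynomial (Fin N) k) (d D₀ t : ℕ)
    {q : MvPolynomial (Fin N) k} (hq : q.IsHomogeneous t)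
    (hmono : ∀ v : Fin N →₀ ℕ, v.degree = t → monomial v (1:k) ∈ Submodule.span k (Gset f d D₀ t)) :
    q ∈ Submodule.span k (Gset f d D₀ t) := by
  rw [← support_sum_monomial_coeff q]
  apply Submodule.sum_mem
  intro u hu
  have hdeg : u.degree = t := by
    have := hq (mem_support_iff.mp hu)
    rw [Finsupp.degree_eq_weight_one]; exact this
  have heq2 : monomial u (coeff u q) = (coeff u q) • monomial u (1:k) := by
    rw [smul_monomial, smul_eq_mul, mul_one]
  rw [heq2]
  exact Submodule.smul_mem _ _ (hmono u hdeg)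

lemma span_claim {N s d M : ℕ} (hd : 0 < d) (hdM : d ≤ M) (hN : 0 < N)
    (f : Fin s → MvPolynomial (Fin N) k) (hf : ∀ i, (f i).IsHomogeneous d)
    (g : Fin N → Fin s → MvPolynomial (Fin N) k)
    (hg : ∀ l j, (g l j).IsHomogeneous (M - d))
    (hXM : ∀ l, (X l : MvPolynomial (Fin N) k) ^ M = ∑ j, g l j * f j) :
    ∀ t (v : Fin N →₀ ℕ), v.degree = t →
      monomial v (1:k) ∈ Submodule.span k (Gset f d (N * M) t) := by
  intro t
  induction t using Nat.strong_induction_on with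
  | _ t ih =>
  intro v hv
  by_cases hcase : t < N * M
  · exact Submodule.subset_span ⟨0, v, by simp [hv], by omega, by simp⟩
  · push_neg at hcase
    -- pigeonhole
    have hex : ∃ l, M ≤ v l := by
      by_contra hno
      push_neg at hno
      have : v.degree ≤ ∑ _l : Fin N, (M - 1) := by
        rw [degree_fin]
        exact Finset.sum_le_sum fun l _ => by have := hno l; omega
      rw [Finset.sum_const, Finset.card_univ, Fintype.card_fin, smul_eq_mul] at this
      have h4 : N * (M - 1 + 1) = N * (M - 1) + N := Nat.mul_succ N (M - 1)
      have h5 : M - 1 + 1 = M := by omega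
      rw [h5] at h4
      omega
    obtain ⟨l, hl⟩ := hex
    set v' : Fin N →₀ ℕ := v - Finsupp.single l M with hv'
    have hsplit : Finsupp.single l M + v' = v := by
      ext x
      rw [Finsupp.add_apply, hv', Finsupp.tsub_apply]
      rcases eq_or_ne x l with rfl | hne
      · simp only [Finsupp.single_eq_same]; omega
      · simp [Finsupp.single_eq_of_ne' (Ne.symm hne)]
    have hv'deg : v'.degree = t - M := by
      have h1 : (Finsupp.single l M).degree + v'.degree = t := by
        have := congrArg Finsupp.degree hsplit
        rwa [degree_fin (Finsupp.single l M + v'), show (∑ x, (Finsupp.single l M + v') x)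
          = (∑ x, Finsupp.single l M x) + ∑ x, v' x from by
            rw [← Finset.sum_add_distrib]; rfl,
          ← degree_fin, ← degree_fin, hv] at this
      have h2 : (Finsupp.single l M).degree = M := by
        rw [degree_fin]
        rw [Finset.sum_eq_single l (fun b _ hb => Finsupp.single_eq_of_ne' (Ne.symm hb)) (by simp)]
        simp
      omega
    have hMt : M ≤ t := le_trans (Nat.le_mul_of_pos_left M hN) hcase
    have hmono_eq : monomial v (1:k) = X l ^ M * monomial v' 1 := by
      rw [X_pow_eq_monomial, monomial_mul, mul_one, hsplit]
    rw [hmono_eq, hXM l, Finset.sum_mul]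
    apply Submodule.sum_mem
    intro j _
    have hterm : g l j * f j * monomial v' 1 = f j * (g l j * monomial v' 1) := by ring
    rw [hterm]
    have hqhom : (g l j * monomial v' 1).IsHomogeneous (t - d) := by
      have := (hg l j).mul (isHomogeneous_monomial (1:k) (hv'deg))
      have heq : (M - d) + (t - M) = t - d := by omega
      rwa [heq] at this
    have hqmem : (g l j * monomial v' 1) ∈ Submodule.span k (Gset f d (N * M) (t - d)) := by
      apply homog_mem_span_of_monomials f d (N * M) (t - d) hqhom
      intro w hw
      exact ih (t - d) (by omega) w hw
    have := mul_f_mem_span f d (N * M) j hqmem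
    rwa [show t - d + d = t from by omega] at this

lemma exists_big_aniso (hk : ¬ IsAlgClosed k) (T : ℕ) : ∃ E, T ≤ E ∧ Aniso k E E := by
  obtain ⟨e₀, he₀, hA⟩ := exists_norm_form hk
  have key : ∀ t : ℕ, Aniso k (e₀ ^ (2 ^ t)) (e₀ ^ (2 ^ t)) := by
    intro t
    induction t with
    | zero => simpa using hA
    | succ t ih =>
      have := aniso_square ih
      rwa [← pow_add, ← two_mul, ← pow_succ'] at this
  refine ⟨e₀ ^ (2 ^ T), ?_, key T⟩
  calc T ≤ 2 ^ T := (Nat.lt_two_pow_self (n := T)).le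
  _ ≤ 2 ^ (2 ^ T) := Nat.pow_le_pow_right (by norm_num) (Nat.lt_two_pow_self (n := T)).le
  _ ≤ e₀ ^ (2 ^ T) := Nat.pow_le_pow_left he₀ _


theorem branch_not_algclosed (r : ℝ) (hr : 0 ≤ r)
    (hk : IsCrField k r) (hnac : ¬ IsAlgClosed k) (n s d : ℕ) (hd : 0 < d) (hs : 0 < s)
    (f : Fin s → MvPolynomial (Fin (n + 1)) k)
    (hf : ∀ i, (f i).IsHomogeneous d)
    (hnum : (s : ℝ) * (d : ℝ) ^ r < (n : ℝ) + 1) :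
    ∃ x : Fin (n + 1) → k, x ≠ 0 ∧ ∀ i, eval x (f i) = 0 := by
  by_contra hno
  push_neg at hno
  have hno' : ∀ x : Fin (n+1) → k, (∀ i, eval x (f i) = 0) → x = 0 := by
    intro x hx
    by_contra hx0
    obtain ⟨i, hi⟩ := hno x hx0
    exact hi (hx i)
  have hWcast : (((n+1 : ℕ)) : ℝ) = (n : ℝ) + 1 := by push_cast; ring
  have hdr1 : (1:ℝ) ≤ (d:ℝ) ^ r := Real.one_le_rpow (by exact_mod_cast hd) hr
  have hspos : (0:ℝ) < s := by exact_mod_cast hs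
  set α : ℝ := ((n+1 : ℕ) : ℝ) / s with hα
  have hαdr : (d:ℝ) ^ r < α := by
    rw [hα, lt_div_iff₀ hspos, hWcast, mul_comm]
    exact hnum
  have hα1 : 1 < α := lt_of_le_of_lt hdr1 hαdr
  set β : ℝ := ((n+1 : ℕ) : ℝ) / (α - 1) with hβ
  have hWpos : (0:ℝ) < ((n+1:ℕ):ℝ) := by positivity
  have hβpos : 0 < β := div_pos hWpos (by linarith)
  have hβW : β * (α - 1) = ((n+1:ℕ):ℝ) := div_mul_cancel₀ _ (by linarith)
  have hWs : (((n+1:ℕ)):ℝ) = α * s := by rw [hα]; field_simp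
  obtain ⟨E, hET, hAE⟩ := exists_big_aniso hnac (⌈β⌉₊ + s + 1)
  have hEβ : β + s + 1 ≤ (E : ℝ) := by
    have h1 : β ≤ (⌈β⌉₊ : ℝ) := Nat.le_ceil β
    have h2 : ((⌈β⌉₊ + s + 1 : ℕ) : ℝ) ≤ (E : ℝ) := by exact_mod_cast hET
    push_cast at h2
    linarith
  have hE1 : 1 ≤ E := by
    have h0 : ((0:ℕ):ℝ) < (E:ℝ) := by push_cast; linarith
    exact_mod_cast h0
  -- the chain
  have chain : ∀ t : ℕ, ∃ v : ℕ, Aniso k (d ^ t * E) v ∧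
      α ^ t * ((E : ℝ) - β) ≤ (v : ℝ) - β := by
    intro t
    induction t with
    | zero =>
      exact ⟨E, by simpa using hAE, by simp⟩
    | succ t ih =>
      obtain ⟨v, hA, hv⟩ := ih
      have hαt : (1:ℝ) ≤ α ^ t := one_le_pow₀ hα1.le
      have hvs : (s : ℝ) < (v : ℝ) := by nlinarith
      have hsv : s ≤ v := by exact_mod_cast hvs.le
      have step := aniso_plug hs f hf hno' hA hsv
      refine ⟨(n+1) * (v / s), ?_, ?_⟩
      · have : d * (d ^ t * E) = d ^ (t+1) * E := by ring
        rwa [this] at step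
      · -- numeric bound
        have h1 : v + 1 ≤ s * (v / s) + s := by
          have h2 := Nat.div_add_mod v s
          have h3 : v % s < s := Nat.mod_lt v hs
          omega
        have h1' : (v:ℝ) + 1 ≤ (s:ℝ) * ((v / s : ℕ) : ℝ) + s := by
          exact_mod_cast h1
        have hq : (((n+1) * (v / s) : ℕ) : ℝ) = ((n+1:ℕ) : ℝ) * ((v / s : ℕ) : ℝ) := by
          push_cast; ring
        rw [hq]
        set q : ℝ := ((v / s : ℕ) : ℝ) with hqd
        have hq0 : 0 ≤ q := by positivity
        have key : ((n+1:ℕ):ℝ) * q ≥ α * ((v:ℝ) + 1 - s) := by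
          rw [hWs, mul_assoc]
          apply mul_le_mul_of_nonneg_left _ (by linarith)
          linarith
        have key2 : ((n+1:ℕ):ℝ) * q - β ≥ α * ((v:ℝ) - β) := by
          have e1 : α * ((v:ℝ) + 1 - s) = α * (v:ℝ) - (α * s) + α := by ring
          have e2 : α * (v:ℝ) - α * β = α * ((v:ℝ) - β) := by ring
          nlinarith [hβW, hWs]
        have : α ^ (t+1) * ((E:ℝ) - β) ≤ α * ((v:ℝ) - β) := by
          rw [pow_succ, mul_comm (α ^ t) α, mul_assoc]
          apply mul_le_mul_of_nonneg_left hv (by linarith)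
        linarith
  -- final contradiction
  have hαdiv : 1 < α / (d:ℝ)^r := by
    rw [lt_div_iff₀ (by linarith)]
    linarith
  have hEβpos : (0:ℝ) < (E:ℝ) - β := by linarith
  obtain ⟨t, ht⟩ := pow_unbounded_of_one_lt ((E:ℝ) ^ r / ((E:ℝ) - β)) hαdiv
  obtain ⟨v, hA, hv⟩ := chain t
  have hDpos : 0 < d ^ t * E := Nat.mul_pos (Nat.pow_pos hd) hE1
  apply aniso_bound hk hDpos hA
  have hEpos : (0:ℝ) < E := by linarith
  have hcast : ((d ^ t * E : ℕ) : ℝ) ^ r = ((d:ℝ)^r) ^ t * (E:ℝ) ^ r := by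
    push_cast
    rw [Real.mul_rpow (by positivity) (by positivity)]
    congr 1
    rw [← Real.rpow_natCast (d:ℝ) t, ← Real.rpow_natCast ((d:ℝ)^r) t,
      ← Real.rpow_mul (by positivity), ← Real.rpow_mul (by positivity), mul_comm]
  rw [hcast]
  have hdrt : (0:ℝ) < ((d:ℝ)^r)^t := by positivity
  rw [div_pow, div_lt_div_iff₀ hEβpos hdrt] at ht
  have hαt' : ((d:ℝ)^r)^t * (E:ℝ)^r < α ^ t * ((E:ℝ) - β) := by nlinarith
  linarith

theorem branch_algclosed (hac : IsAlgClosed k) (n s' d : ℕ) (hd : 0 < d)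
    (hsn : s' + 1 < n + 1)
    (f : Fin (s' + 1) → MvPolynomial (Fin (n + 1)) k) (hf : ∀ i, (f i).IsHomogeneous d) :
    ∃ x : Fin (n + 1) → k, x ≠ 0 ∧ ∀ i, eval x (f i) = 0 := by
  classical
  haveI := hac
  by_contra hno
  push_neg at hno
  have hno' : ∀ x : Fin (n+1) → k, (∀ i, eval x (f i) = 0) → x = 0 := by
    intro x hx
    by_contra hx0
    obtain ⟨i, hi⟩ := hno x hx0
    exact hi (hx i)
  -- Nullstellensatz
  have hzero : MvPolynomial.zeroLocus k (Ideal.span (Set.range f)) = {(0 : Fin (n+1) → k)} := by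
    apply Set.eq_singleton_iff_unique_mem.mpr
    constructor
    · rw [MvPolynomial.mem_zeroLocus_iff]
      intro p hp
      induction hp using Submodule.span_induction with
      | mem q hq =>
        obtain ⟨i, rfl⟩ := hq
        have h0 : constantCoeff (f i) = 0 := by
          rw [constantCoeff_eq]
          exact (hf i).coeff_eq_zero (by simp [map_zero]; omega)
        change eval 0 (f i) = 0
        rw [eval_zero]
        exact h0
      | zero => simp
      | add q q' _ _ hq hq' => rw [map_add, hq, hq', add_zero]
      | smul c q _ hq => rw [smul_eq_mul, map_mul, hq, mul_zero]
    · intro x hx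
      rw [MvPolynomial.mem_zeroLocus_iff] at hx
      exact hno' x fun i => hx (f i) (Ideal.subset_span ⟨i, rfl⟩)
  have hrad : ∀ l, (X l : MvPolynomial (Fin (n+1)) k) ∈ (Ideal.span (Set.range f)).radical := by
    intro l
    rw [← MvPolynomial.vanishingIdeal_zeroLocus_eq_radical (K := k), hzero,
      MvPolynomial.mem_vanishingIdeal_iff]
    intro x hx
    rw [Set.mem_singleton_iff] at hx
    subst hx
    simp
  choose Mf hMf using fun l => Ideal.mem_radical_iff.mp (hrad l)
  set M : ℕ := (Finset.univ.sup Mf) + d with hMdef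
  have hdM : d ≤ M := by rw [hMdef]; omega
  have hXM : ∀ l, (X l : MvPolynomial (Fin (n+1)) k) ^ M ∈ Ideal.span (Set.range f) := by
    intro l
    have h1 : Mf l ≤ M := le_trans (Finset.le_sup (Finset.mem_univ l)) (by rw [hMdef]; omega)
    rw [show M = (M - Mf l) + Mf l from by omega, pow_add]
    exact Ideal.mul_mem_left _ _ (hMf l)
  have hcomb : ∀ l, ∃ g : Fin (s'+1) → MvPolynomial (Fin (n+1)) k,
      (∀ j, (g j).IsHomogeneous (M - d)) ∧
      (X l : MvPolynomial (Fin (n+1)) k) ^ M = ∑ j, g j * f j := by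
    intro l
    refine exists_homog_comb hd hdM f _ ?_ (hXM l) hf
    simpa using (isHomogeneous_X k l).pow M
  choose g hg hgXM using hcomb
  have spanC := span_claim hd hdM (by omega : 0 < n+1) f hf g hg hgXM
  -- counting setup
  set B₀ : ℕ := ((n+1) * M)^(n+1) with hB₀
  set u : ℕ := (s'+1)^s' * B₀ + 1 with hu
  have hu1 : 1 ≤ u := by rw [hu]; omega
  set t : ℕ := (s'+1) * u - 1 with ht
  have htu : t + 1 = (s'+1) * u := by
    have h2 : u ≤ (s'+1) * u := Nat.le_mul_of_pos_left u (by omega)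
    rw [ht]
    omega
  -- the embedding of Fin (s'+1) into Fin (n+1) avoiding the last index
  set emb : Fin (s'+1) → Fin (n+1) := fun i => ⟨i.1, by omega⟩ with hemb
  have hembne : ∀ i, emb i ≠ Fin.last n := by
    intro i h
    have := congrArg Fin.val h
    rw [hemb] at this
    simp only [Fin.val_last] at this
    have := i.2
    omega
  have hembinj : Function.Injective emb := by
    intro i j h
    have := congrArg Fin.val h
    rw [hemb] at this
    exact Fin.ext this
  set vfun : (Fin (s'+1) → Fin u) → (Fin (n+1) →₀ ℕ) := fun b =>
    (∑ i, Finsupp.single (emb i) (b i : ℕ)) +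
      Finsupp.single (Fin.last n) (t - ∑ i, (b i : ℕ)) with hvfun
  have hsumb : ∀ b : Fin (s'+1) → Fin u, ∑ i, (b i : ℕ) ≤ t := by
    intro b
    have h1 : ∑ i, (b i : ℕ) ≤ ∑ _i : Fin (s'+1), (u-1) :=
      Finset.sum_le_sum (fun i _ => by have := (b i).2; omega)
    rw [Finset.sum_const, Finset.card_univ, Fintype.card_fin, smul_eq_mul] at h1
    have h2 : (s'+1) * (u-1) + (s'+1) = (s'+1) * u := by
      conv_rhs => rw [show u = (u-1)+1 from by omega]
      rw [Nat.mul_succ]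
    omega
  have hvdeg : ∀ b, (vfun b).degree = t := by
    intro b
    rw [hvfun]
    dsimp only
    rw [degree_add', degree_sum_fam, degree_single']
    simp_rw [degree_single']
    have := hsumb b
    omega
  have hvapp : ∀ b i, vfun b (emb i) = (b i : ℕ) := by
    intro b i
    rw [hvfun]
    dsimp only
    rw [Finsupp.add_apply, Finsupp.single_eq_of_ne' (fun h => hembne i h.symm),
      Finsupp.finset_sum_apply, Finset.sum_eq_single i
        (fun j _ hj => Finsupp.single_eq_of_ne' (fun h => hj (hembinj h))) (by simp)]
    simp
  have hvinj : Function.Injective vfun := by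
    intro b b' h
    funext i
    have := hvapp b i
    rw [h, hvapp b' i] at this
    exact Fin.ext this.symm
  have hmem : ∀ b, monomial (vfun b) (1:k) ∈
      Submodule.span k (Gset f d ((n+1)*M) t) :=
    fun b => spanC t (vfun b) (hvdeg b)
  -- the upper generating family
  set vof : (Fin (n+1) → ℕ) → (Fin (n+1) →₀ ℕ) := fun w => Finsupp.equivFunOnFinite.symm w
    with hvof
  set hfun : ((Fin s' → Fin (t+1)) × (Fin (n+1) → Fin ((n+1)*M))) →
      MvPolynomial (Fin (n+1)) k := fun γ =>
    if (vof fun l => (γ.2 l : ℕ)).degree + d * (∑ i, (γ.1 i : ℕ)) ≤ t ∧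
        d ∣ (t - (vof fun l => (γ.2 l : ℕ)).degree - d * (∑ i, (γ.1 i : ℕ))) then
      (∏ i, f i ^ (Fin.snoc (fun i' : Fin s' => (γ.1 i' : ℕ))
        ((t - (vof fun l => (γ.2 l : ℕ)).degree - d * (∑ i, (γ.1 i : ℕ)))/d) i))
        * monomial (vof fun l => (γ.2 l : ℕ)) 1
    else 0
    with hhfun
  have cover : Gset f d ((n+1)*M) t ⊆ Set.range hfun := by
    rintro p ⟨a, v, hsum, hlt, rfl⟩
    have hbound_a : ∀ j, a j ≤ t := by
      intro j
      have h1 : a j ≤ ∑ i, a i :=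
        Finset.single_le_sum (fun _ _ => Nat.zero_le _) (Finset.mem_univ j)
      have h2 : ∑ i, a i ≤ d * ∑ i, a i := Nat.le_mul_of_pos_left _ hd
      omega
    refine ⟨⟨fun i => ⟨a i.castSucc, by have := hbound_a i.castSucc; omega⟩,
            fun l => ⟨v l, lt_of_le_of_lt (Finsupp.le_degree l v) hlt⟩⟩, ?_⟩
    rw [hhfun]
    dsimp only
    have hw : (vof fun l => v l) = v := Finsupp.equivFunOnFinite_symm_coe v
    rw [hw]
    have e1 : d * (∑ i, a i) = d * (∑ i : Fin s', a i.castSucc) + d * a (Fin.last s') := by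
      rw [Fin.sum_univ_castSucc, Nat.mul_add]
    have e2 : t - v.degree - d * (∑ i : Fin s', a i.castSucc) = d * a (Fin.last s') := by
      omega
    rw [if_pos ⟨by omega, by rw [e2]; exact dvd_mul_right _ _⟩]
    rw [e2, Nat.mul_div_cancel_left _ hd]
    have hsnoc : (Fin.snoc (fun i' : Fin s' => a i'.castSucc) (a (Fin.last s'))
        : Fin (s'+1) → ℕ) = a := by
      funext x
      refine Fin.lastCases ?_ ?_ x
      · rw [Fin.snoc_last]
      · intro i
        rw [Fin.snoc_castSucc]
    rw [hsnoc]
  -- rank comparison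
  have upper : Submodule.span k (Gset f d ((n+1)*M) t) ≤ Submodule.span k (Set.range hfun) :=
    Submodule.span_mono cover
  have hranklow : (Cardinal.mk (Fin (s'+1) → Fin u)) ≤
      Module.rank k (Submodule.span k (Set.range hfun)) := by
    have hmemS : ∀ b, monomial (vfun b) (1:k) ∈ Submodule.span k (Set.range hfun) :=
      fun b => upper (hmem b)
    have hli0 : LinearIndependent k (fun b : Fin (s'+1) → Fin u => monomial (vfun b) (1:k)) := by
      have h2 := (basisMonomials (Fin (n+1)) k).linearIndependent.comp vfun hvinj
      rwa [coe_basisMonomials] at h2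
    have hli : LinearIndependent k (fun b => (⟨monomial (vfun b) 1, hmemS b⟩ :
        Submodule.span k (Set.range hfun))) := by
      apply LinearIndependent.of_comp (Submodule.span k (Set.range hfun)).subtype
      exact hli0
    exact hli.cardinal_le_rank
  have hrankhigh : Module.rank k (Submodule.span k (Set.range hfun)) ≤
      (Cardinal.mk ((Fin s' → Fin (t+1)) × (Fin (n+1) → Fin ((n+1)*M)))) :=
    le_trans (rank_span_le _) Cardinal.mk_range_le
  have hcard : Fintype.card (Fin (s'+1) → Fin u) ≤
      Fintype.card ((Fin s' → Fin (t+1)) × (Fin (n+1) → Fin ((n+1)*M))) := by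
    have h3 := le_trans hranklow hrankhigh
    rwa [Cardinal.mk_fintype, Cardinal.mk_fintype, Nat.cast_le] at h3
  have h1 : Fintype.card (Fin (s'+1) → Fin u) = u ^ (s'+1) := by simp
  have h2 : Fintype.card ((Fin s' → Fin (t+1)) × (Fin (n+1) → Fin ((n+1)*M)))
      = (t+1)^s' * B₀ := by
    rw [hB₀, Fintype.card_prod, Fintype.card_fun, Fintype.card_fun,
      Fintype.card_fin, Fintype.card_fin, Fintype.card_fin, Fintype.card_fin]
  rw [h1, h2, htu, mul_pow] at hcard
  have h4 : u * u^s' ≤ ((s'+1)^s' * B₀) * u^s' := by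
    calc u * u^s' = u^(s'+1) := by rw [pow_succ, mul_comm]
    _ ≤ (s'+1)^s' * u^s' * B₀ := hcard
    _ = ((s'+1)^s' * B₀) * u^s' := by ring
  have h5 : u ≤ (s'+1)^s' * B₀ :=
    Nat.le_of_mul_le_mul_right h4 (Nat.pow_pos (by omega : 0 < u))
  rw [hu] at h5
  omega

end Helpers

/-- Lang's theorem, homogeneous systems:
Let `k` be a `C_r` field and let `f_1, ..., f_s ∈ k[x_0, ..., x_n]` be homogeneous polynomials,
all of the same degree `d > 0`.  If `n + 1 > s·d^r`, then `f_1, ..., f_s` have a common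
nontrivial zero in `k^{n+1}`. -/
theorem cr_field_system_common_nontrivial_zero (k : Type) [Field k] (r : ℝ) (hr : 0 ≤ r)
    (hk : IsCrField k r) (n s d : ℕ) (hd : 0 < d)
    (f : Fin s → MvPolynomial (Fin (n + 1)) k)
    (hf : ∀ i, (f i).IsHomogeneous d)
    (hnum : (s : ℝ) * (d : ℝ) ^ r < (n : ℝ) + 1) :
    ∃ x : Fin (n + 1) → k, x ≠ 0 ∧ ∀ i, eval x (f i) = 0 := by
  rcases Nat.eq_zero_or_pos s with hs0 | hs
  · subst hs0
    refine ⟨fun _ => 1, ?_, fun i => i.elim0⟩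
    intro h
    have := congrFun h ⟨0, by omega⟩
    simp at this
  · by_cases hac : IsAlgClosed k
    · have hdr1 : (1:ℝ) ≤ (d:ℝ) ^ r := Real.one_le_rpow (by exact_mod_cast hd) hr
      have hspos : (0:ℝ) < s := by exact_mod_cast hs
      have hsn : s < n + 1 := by
        have h1 : (s:ℝ) ≤ (s:ℝ) * (d:ℝ)^r := by nlinarith
        have h2 : (s:ℝ) < ((n+1:ℕ):ℝ) := by push_cast; linarith
        exact_mod_cast h2
      obtain ⟨s', rfl⟩ := Nat.exists_eq_succ_of_ne_zero hs.ne'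
      exact branch_algclosed hac n s' d hd hsn f hf
    · exact branch_not_algclosed r hr hk hac n s d hd hs f hf hnum
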